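/- Let M be a κ⁺-saturated model with A ⊆ M, where κ = ℵ₀ + |A|. If p ∈ S_M(x) is invariant over A, then there is a unique type in S_D(x) (for any M ⊆ D ⊆ U) which is invariant over A and extends p. -/

import Mathlib

open FirstOrder Language Set

namespace DR

/-- A partial type over `M` in variables indexed by `β`: a set of formulas, each with
finitely many parameters from `M`. -/
abbrev PType (L : FirstOrder.Language) (M : Type) (β : Type) : Type _ :=
  Set ((k : ℕ) × (L.Formula (β ⊕ Fin k) × (Fin k → M)))

variable {M : Type}

/-- Two `β`-tuples have the same type over the parameter set `A`. -/
def EqTp (L : FirstOrder.Language) [L.Structure M] (A : Set M) {β : Type} (f g : β → M) : Prop :=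
  ∀ (k : ℕ) (a : Fin k → M), (∀ i, a i ∈ A) →
    ∀ φ : L.Formula (β ⊕ Fin k), φ.Realize (Sum.elim f a) ↔ φ.Realize (Sum.elim g a)

/-- All parameters of formulas in `p` lie in `D`. -/
def paramsIn {L : FirstOrder.Language} {β : Type} (D : Set M) (p : PType L M β) : Prop :=
  ∀ x ∈ p, ∀ i, x.2.2 i ∈ D

/-- The set of parameters appearing in `p`. -/
def paramSet {L : FirstOrder.Language} {β : Type} (p : PType L M β) : Set M :=
  ⋃ x ∈ p, Set.range x.2.2

/-- The tuple `f` realizes every formula of `p`. -/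
def realizes {L : FirstOrder.Language} [L.Structure M] {β : Type} (f : β → M)
    (p : PType L M β) : Prop :=
  ∀ x ∈ p, x.2.1.Realize (Sum.elim f x.2.2)

/-- `p` is finitely satisfiable by tuples with coordinates in `A`. -/
def finSatIn (L : FirstOrder.Language) [L.Structure M] (A : Set M) {β : Type}
    (p : PType L M β) : Prop :=
  ∀ s : Finset ((k : ℕ) × (L.Formula (β ⊕ Fin k) × (Fin k → M))), ↑s ⊆ p →
    ∃ f : β → M, (∀ i, f i ∈ A) ∧ ∀ x ∈ s, x.2.1.Realize (Sum.elim f x.2.2)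

/-- `p` is a complete (consistent) type over the parameter set `D`. -/
def isCompleteOver (L : FirstOrder.Language) [L.Structure M] (D : Set M) {β : Type}
    (p : PType L M β) : Prop :=
  paramsIn D p ∧ finSatIn L Set.univ p ∧
    ∀ (k : ℕ) (φ : L.Formula (β ⊕ Fin k)) (d : Fin k → M), (∀ i, d i ∈ D) →
      (⟨k, φ, d⟩ ∈ p ∨ ⟨k, φ.not, d⟩ ∈ p)

/-- `p` (a type with parameters in `D`) is invariant over `A`: membership of a formula depends
only on the type over `A` of its parameter tuple. -/
def invariantOver (L : FirstOrder.Language) [L.Structure M] (A D : Set M) {β : Type}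
    (p : PType L M β) : Prop :=
  ∀ (k : ℕ) (φ : L.Formula (β ⊕ Fin k)) (d d' : Fin k → M), (∀ i, d' i ∈ D) →
    EqTp L A d d' → ⟨k, φ, d⟩ ∈ p → ⟨k, φ, d'⟩ ∈ p

/-- The restriction of `p` to formulas with parameters in `S`. -/
def restrictParams {L : FirstOrder.Language} {β : Type} (S : Set M) (p : PType L M β) :
    PType L M β :=
  {x ∈ p | ∀ i, x.2.2 i ∈ S}

/-- `S` is `κ⁺`-saturated (realizes consistent types over parameter sets of size `≤ κ`). -/
def satIn (L : FirstOrder.Language) [L.Structure M] (S : Set M) (κ : Cardinal) : Prop :=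
  ∀ (n : ℕ) (p : PType L M (Fin n)), paramsIn S p → Cardinal.mk ↥(paramSet p) ≤ κ →
    finSatIn L Set.univ p → ∃ f : Fin n → M, (∀ i, f i ∈ S) ∧ realizes f p

/-- Saturation of the whole structure below the cardinal `κ` (in all small variable contexts). -/
def SatAll (L : FirstOrder.Language) (M : Type) [L.Structure M] (κ : Cardinal) : Prop :=
  ∀ (β : Type) (p : PType L M β), Cardinal.mk β < κ → Cardinal.mk ↥(paramSet p) < κ →
    finSatIn L Set.univ p → ∃ f : β → M, realizes f p

/-- `M` is a monster model: saturated in its own cardinality. -/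
def IsMonster (L : FirstOrder.Language) (M : Type) [L.Structure M] : Prop :=
  SatAll L M (Cardinal.mk M)

/-- The restriction of an `n`-type in tuple-variables to the sub-tuple of variables
selected by `σ`. -/
def restrictVars {L : FirstOrder.Language} {α : Type} {m n : ℕ} (σ : Fin m → Fin n)
    (p : PType L M (Fin n × α)) : PType L M (Fin m × α) :=
  {x | ⟨x.1, x.2.1.relabel (Sum.map (Prod.map σ id) id), x.2.2⟩ ∈ p}

/-- An `n`-type over `D` is `m`-determined if it is completely determined by the `m`-types
it contains among its variables. -/
def mDetermined (L : FirstOrder.Language) [L.Structure M] {α : Type} {n : ℕ} (m : ℕ)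
    (D : Set M) (p : PType L M (Fin n × α)) : Prop :=
  ∀ q : PType L M (Fin n × α), isCompleteOver L D q →
    (∀ σ : Fin m → Fin n, StrictMono σ → restrictVars σ q = restrictVars σ p) → q = p

/-- Flatten a finite tuple of `α`-tuples into a single tuple. -/
def tupcat {α : Type} {N : ℕ} (c : Fin N → α → M) : Fin N × α → M := fun x => c x.1 x.2

/-- The sequence `b` of `α`-tuples is indiscernible over `A`. -/
def indiscOver (L : FirstOrder.Language) [L.Structure M] (A : Set M) {ι α : Type}
    [LinearOrder ι] (b : ι → α → M) : Prop :=
  ∀ (N : ℕ) (f g : Fin N → ι), StrictMono f → StrictMono g →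
    EqTp L A (tupcat fun j => b (f j)) (tupcat fun j => b (g j))

/-- `T = Th(M)` is NIP: every formula has finite alternation rank on every
indiscernible sequence. -/
def IsNIP (L : FirstOrder.Language) (M : Type) [L.Structure M] : Prop :=
  ∀ (β ι : Type) [LinearOrder ι] (b : ι → β → M), indiscOver L ∅ b →
    ∀ (k : ℕ) (φ : L.Formula (β ⊕ Fin k)) (d : Fin k → M),
      ∃ N : ℕ, ∀ f : Fin (N + 1) → ι, StrictMono f →
        ∃ j : Fin N,
          (φ.Realize (Sum.elim (b (f j.castSucc)) d) ↔ φ.Realize (Sum.elim (b (f j.succ)) d))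

/-- The (global) limit type of a sequence: formulas eventually satisfied along the sequence. -/
def limTp (L : FirstOrder.Language) [L.Structure M] {ι : Type} [LinearOrder ι] (b : ι → M) :
    PType L M (Fin 1) :=
  {x | ∃ i₀ : ι, ∀ i ≥ i₀, x.2.1.Realize (Sum.elim (fun _ : Fin 1 => b i) x.2.2)}

/-- The product `p₀ ⊗ ⋯ ⊗ p_{n-1}` (resolved left to right) of global types invariant
over `A`, in singleton variables. -/
def nProd (L : FirstOrder.Language) [L.Structure M] (A : Set M) :
    (n : ℕ) → (Fin n → PType L M (Fin 1)) → PType L M (Fin n)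
  | 0, _ => {x | x.2.1.Realize (Sum.elim (fun v : Fin 0 => v.elim0) x.2.2)}
  | n + 1, ps =>
    {x | ∀ a : M,
      realizes (fun _ : Fin 1 => a) (restrictParams (A ∪ Set.range x.2.2) (ps 0)) →
      ⟨x.1 + 1,
        x.2.1.relabel (Sum.elim
          (fun v : Fin (n + 1) =>
            (Fin.cases (Sum.inr (Fin.last x.1)) (fun i => Sum.inl i) v : Fin n ⊕ Fin (x.1 + 1)))
          (fun j : Fin x.1 => Sum.inr j.castSucc)),
        Fin.snoc x.2.2 a⟩ ∈ nProd L A n (fun i => ps i.succ)}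

/-- `c` is (the left part of) a Dedekind cut: a nonempty proper lower set with no maximum,
whose complement has no minimum. -/
def IsDedekindCut {ι : Type} [LinearOrder ι] (c : Set ι) : Prop :=
  c.Nonempty ∧ cᶜ.Nonempty ∧ (∀ i ∈ c, ∀ j, j ≤ i → j ∈ c) ∧
    (∀ i ∈ c, ∃ j ∈ c, i < j) ∧ (∀ i ∈ cᶜ, ∃ j ∈ cᶜ, j < i)

/-- The strict order on the index extended by points inserted at the cuts `Lc`. -/
def insLT {ι η : Type} [LinearOrder ι] [LinearOrder η] (Lc : η → Set ι) :
    (ι ⊕ η) → (ι ⊕ η) → Prop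
  | Sum.inl i, Sum.inl j => i < j
  | Sum.inl i, Sum.inr e => i ∈ Lc e
  | Sum.inr e, Sum.inl i => i ∉ Lc e
  | Sum.inr e, Sum.inr e' => Lc e ⊂ Lc e' ∨ (Lc e = Lc e' ∧ e < e')

/-- The sequence `b` remains indiscernible over `A` after inserting the tuples `a e` for
`e ∈ S`, each at the cut `Lc e`. -/
def InsertsInd (L : FirstOrder.Language) [L.Structure M] (A : Set M) {ι η α : Type}
    [LinearOrder ι] [LinearOrder η] (b : ι → α → M) (Lc : η → Set ι) (a : η → α → M)
    (S : Set η) : Prop :=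
  ∀ (N : ℕ) (f g : Fin N → ι ⊕ η),
    (∀ x y : Fin N, x < y → insLT Lc (f x) (f y)) →
    (∀ x y : Fin N, x < y → insLT Lc (g x) (g y)) →
    (∀ x e, f x = Sum.inr e → e ∈ S) → (∀ x e, g x = Sum.inr e → e ∈ S) →
    EqTp L A (tupcat fun j => Sum.elim b a (f j)) (tupcat fun j => Sum.elim b a (g j))

/-- The left part of the `t`-th cut of the partition `part`. -/
def cutSet {ι : Type} [LinearOrder ι] {n : ℕ} (part : ι → Fin (n + 1)) (t : Fin n) : Set ι :=
  {i | part i ≤ t.castSucc}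

/-- `part` is a Dedekind partition: a monotone surjection onto `Fin (n+1)` all of whose
`n` cuts are Dedekind. -/
def IsDedekindPartition {ι : Type} [LinearOrder ι] {n : ℕ} (part : ι → Fin (n + 1)) : Prop :=
  Monotone part ∧ (∀ t, ∃ i, part i = t) ∧ ∀ t : Fin n, IsDedekindCut (cutSet part t)

/-- The Dedekind partition `part` of the sequence `b` (indiscernible over `A`) is `m`-distal:
if every `m`-element subset of `(a 0, …, a (n-1))` inserts indiscernibly over `A` at the cuts,
then the whole tuple inserts. -/
def MDistalPartition (L : FirstOrder.Language) [L.Structure M] (A : Set M) {ι α : Type}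
    [LinearOrder ι] {n : ℕ} (b : ι → α → M) (part : ι → Fin (n + 1)) (m : ℕ) : Prop :=
  ∀ a : Fin n → α → M,
    (∀ S : Set (Fin n), S.ncard = m → InsertsInd L A b (cutSet part) a S) →
    InsertsInd L A b (cutSet part) a Set.univ

/-- The limit type `lim(c₀, …, c_{n-1})` of the cuts of the partition `part`, as a type
in `n` tuple-variables: formulas satisfied by all tuples close enough to the cuts. -/
def limCutTp (L : FirstOrder.Language) [L.Structure M] {ι α : Type} [LinearOrder ι] {n : ℕ}
    (b : ι → α → M) (part : ι → Fin (n + 1)) : PType L M (Fin n × α) :=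
  {x | ∃ lo hi : Fin n → ι,
    (∀ t, lo t ∈ cutSet part t) ∧ (∀ t, hi t ∉ cutSet part t) ∧
    ∀ it : Fin n → ι, (∀ t, lo t < it t ∧ it t < hi t) →
      x.2.1.Realize (Sum.elim (fun v => b (it v.1) v.2) x.2.2)}

/-- Two sequences have the same EM-type (over `∅`). -/
def SameEM (L : FirstOrder.Language) [L.Structure M] {ι κι α : Type} [LinearOrder ι]
    [LinearOrder κι] (b : ι → α → M) (c : κι → α → M) : Prop :=
  ∀ (N : ℕ) (f : Fin N → ι) (g : Fin N → κι), StrictMono f → StrictMono g →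
    EqTp L ∅ (tupcat fun j => b (f j)) (tupcat fun j => c (g j))

/-- The complete EM-type of the indiscernible sequence `b` is `(n, m)`-distal: every Dedekind
partition with `n` cuts of every sequence with the same EM-type is `m`-distal. -/
def EMdistalNM (L : FirstOrder.Language) [L.Structure M] {ι α : Type} [LinearOrder ι]
    (b : ι → α → M) (n m : ℕ) : Prop :=
  ∀ (κι : Type) [LinearOrder κι] (c : κι → α → M), SameEM L b c →
    ∀ part : κι → Fin (n + 1), IsDedekindPartition part → MDistalPartition L ∅ c part m

/-- The index of an `(m+1)`-skeleton: `ω + (ω* + ω) + ⋯ + (ω* + ω) + ω*` with `m` middle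
pieces of type `ω* + ω ≅ ℤ`. -/
abbrev SkelIdx (m : ℕ) : Type := (ℕ ⊕ₗ Lex (Fin m × ℤ)) ⊕ₗ ℕᵒᵈ

/-- The canonical partition of the skeleton index into its `m + 2` pieces. -/
def skelPart (m : ℕ) : SkelIdx m → Fin (m + 2) := fun x =>
  match ofLex x with
  | Sum.inl y =>
    match ofLex y with
    | Sum.inl _ => 0
    | Sum.inr tz => ((ofLex tz).1.succ).castSucc
  | Sum.inr _ => Fin.last (m + 1)

/-- The theory of `M`, with parameters for `A` named, is `m`-distal: every Dedekind
partition with `m + 1` cuts of every sequence indiscernible over `A` is `m`-distal over `A`. -/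
def TheoryMDistalOver (L : FirstOrder.Language) (M : Type) [L.Structure M] (A : Set M)
    (m : ℕ) : Prop :=
  ∀ (ι α : Type) [LinearOrder ι] (b : ι → α → M), indiscOver L A b →
    ∀ part : ι → Fin (m + 2), IsDedekindPartition part → MDistalPartition L A b part m

/-- `T = Th(M)` is stable: every indiscernible sequence is totally indiscernible. -/
def TotallyIndisc (L : FirstOrder.Language) (M : Type) [L.Structure M] : Prop :=
  ∀ (ι α : Type) [LinearOrder ι] (b : ι → α → M), indiscOver L ∅ b →
    ∀ (N : ℕ) (f g : Fin N → ι), Function.Injective f → Function.Injective g →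
      EqTp L ∅ (tupcat fun j => b (f j)) (tupcat fun j => b (g j))

/-- `T = Th(M)` is strongly `1`-distal. -/
def StronglyOneDistal (L : FirstOrder.Language) (M : Type) [L.Structure M] : Prop :=
  ∀ (ι α : Type) [LinearOrder ι] (b : ι → α → M) (c : Set ι), IsDedekindCut c →
    ∀ (D : Set M) (a : α → M), indiscOver L D b →
      InsertsInd L ∅ b (fun _ : PUnit => c) (fun _ => a) Set.univ →
      InsertsInd L D b (fun _ : PUnit => c) (fun _ => a) Set.univ

/-- The language with a single `n`-ary relation symbol. -/
def hyperLang (n : ℕ) : FirstOrder.Language where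
  Functions := fun _ => Empty
  Relations := fun k => PLift (k = n)

/-- The edge relation of a `hyperLang n`-structure. -/
def Edge {n : ℕ} {M : Type} [S : (hyperLang n).Structure M] (v : Fin n → M) : Prop :=
  Structure.RelMap (L := hyperLang n) (⟨rfl⟩ : (hyperLang n).Relations n) v

/-- `M` is a generic `(n+2)`-uniform hypergraph: an infinite `(n+2)`-uniform hypergraph
satisfying all extension axioms `φ_{s,t}`. -/
def IsGenericHypergraph (n : ℕ) (M : Type) [S : (hyperLang (n + 2)).Structure M] : Prop :=
  Infinite M ∧
  (∀ (v : Fin (n + 2) → M) (σ : Equiv.Perm (Fin (n + 2))), Edge v → Edge (v ∘ σ)) ∧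
  (∀ v : Fin (n + 2) → M, Edge v → Function.Injective v) ∧
  ∀ (s t : ℕ) (A : Fin s → Fin (n + 1) → M) (B : Fin t → Fin (n + 1) → M),
    (∀ i, Function.Injective (A i)) → (∀ j, Function.Injective (B j)) →
    (∀ i j, i ≠ j → Set.range (A i) ≠ Set.range (A j)) →
    (∀ i j, i ≠ j → Set.range (B i) ≠ Set.range (B j)) →
    (∀ i j, Set.range (A i) ≠ Set.range (B j)) →
    ∃ x : M, (∀ i, Edge (Fin.snoc (A i) x)) ∧ ∀ j, ¬ Edge (Fin.snoc (B j) x)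

variable {M : Type}

/-- The unique `A`-invariant global extension of a type `q` over the saturated model `S`. -/
def globExtT (L : FirstOrder.Language) [L.Structure M] (A S : Set M) {β : Type}
    (q : PType L M β) : PType L M β :=
  {x | ∀ d' : Fin x.1 → M, (∀ i, d' i ∈ S) → EqTp L A x.2.2 d' → ⟨x.1, x.2.1, d'⟩ ∈ q}

/-- The product `p ⊗ q` (resolved left to right) of a type `p` with an `A`-invariant type `q`
over the saturated model `S`: `φ(x, y, d) ∈ p ⊗ q` iff for every `a` realizing the restriction
of `p` to `A ∪ d`, the formula `φ(a, y, d)` lies in the `A`-invariant global extension of `q`. -/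
def prodT (L : FirstOrder.Language) [L.Structure M] (A S : Set M) {na nb : ℕ}
    (p : PType L M (Fin na)) (q : PType L M (Fin nb)) : PType L M (Fin na ⊕ Fin nb) :=
  {x | ∀ a : Fin na → M, realizes a (restrictParams (A ∪ Set.range x.2.2) p) →
    ⟨x.1 + na,
      x.2.1.relabel (Sum.elim
        (Sum.elim (fun i : Fin na => Sum.inr (Fin.natAdd x.1 i)) Sum.inl)
        (fun j : Fin x.1 => Sum.inr (Fin.castAdd na j))),
      Fin.append x.2.2 a⟩ ∈ globExtT L A S q}

/-- A Dedekind partition with `n` cuts of a sequence with the same EM-type as `b`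
which is `m`-distal. -/
structure DistalWitness (L : FirstOrder.Language) (M : Type) [L.Structure M] {ι α : Type}
    [LinearOrder ι] (b : ι → α → M) (n m : ℕ) : Type 1 where
  κι : Type
  [inst : LinearOrder κι]
  c : κι → α → M
  part : κι → Fin (n + 1)
  same : SameEM L b c
  ded : IsDedekindPartition part
  dist : MDistalPartition L ∅ c part m


section Aux

variable {L : FirstOrder.Language} [L.Structure M]

theorem eqTp_symm {A : Set M} {β : Type} {f g : β → M} (h : EqTp L A f g) : EqTp L A g f :=
  fun k a ha φ => (h k a ha φ).symm

theorem eqTp_trans {A : Set M} {β : Type} {f g h : β → M}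
    (h1 : EqTp L A f g) (h2 : EqTp L A g h) : EqTp L A f h :=
  fun k a ha φ => (h1 k a ha φ).trans (h2 k a ha φ)

theorem realize_relabel_sum {γ γ' δ δ' : Type} (e : γ → γ') (ρ : δ → δ')
    (φ : L.Formula (γ ⊕ δ)) (u : γ' → M) (a : δ' → M) :
    (φ.relabel (Sum.map e ρ)).Realize (Sum.elim u a) ↔ φ.Realize (Sum.elim (u ∘ e) (a ∘ ρ)) := by
  rw [Formula.realize_relabel]
  constructor <;> (intro h; convert h using 2; funext z; cases z <;> rfl)

theorem eqTp_comp {A : Set M} {γ δ : Type} (ρ : δ → γ) {f g : γ → M}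
    (h : EqTp L A f g) : EqTp L A (f ∘ ρ) (g ∘ ρ) := by
  intro k a ha φ
  have := h k a ha (φ.relabel (Sum.map ρ id))
  rw [realize_relabel_sum, realize_relabel_sum] at this
  simpa using this

theorem realize_foldr_inf {α : Type} (l : List (L.Formula α)) (v : α → M) :
    (l.foldr (· ⊓ ·) ⊤).Realize v ↔ ∀ φ ∈ l, φ.Realize v := by
  induction l with
  | nil => simp [Formula.Realize]
  | cons φ l ih =>
    simp only [List.foldr_cons, List.mem_cons]
    constructor
    · intro h ψ hψ
      rcases hψ with rfl | hψ
      · exact (BoundedFormula.realize_inf.mp h).1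
      · exact ih.mp (BoundedFormula.realize_inf.mp h).2 ψ hψ
    · intro h
      exact BoundedFormula.realize_inf.mpr ⟨h φ (Or.inl rfl), ih.mpr fun ψ hψ => h ψ (Or.inr hψ)⟩

theorem formula_realize_restrictFreeVar {α : Type} [DecidableEq α] {φ : L.Formula α}
    {s : Set α} (h : ↑(BoundedFormula.freeVarFinset φ) ⊆ s) (v : α → M) :
    Formula.Realize (φ.restrictFreeVar (Set.inclusion h)) (v ∘ (↑)) ↔ φ.Realize v :=
  BoundedFormula.realize_restrictFreeVar' h

/-- Key saturation consequence: every finite tuple has a tuple in `S` with the same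
type over `A`. -/
theorem exists_eqTp_in {A S : Set M} (hAS : A ⊆ S)
    (hsat : satIn L S (Cardinal.aleph0 + Cardinal.mk ↥A)) {γ : Type} [Fintype γ]
    (d : γ → M) : ∃ d' : γ → M, (∀ i, d' i ∈ S) ∧ EqTp L A d d' := by
  classical
  let e := Fintype.equivFin γ
  set n := Fintype.card γ with hn
  set p' : PType L M (Fin n) :=
    {x | (∀ i, x.2.2 i ∈ A) ∧ x.2.1.Realize (Sum.elim (d ∘ e.symm) x.2.2)} with hp'
  have hparams : paramsIn S p' := fun x hx i => hAS (hx.1 i)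
  have hsub : paramSet p' ⊆ A := by
    intro m hm
    simp only [paramSet, Set.mem_iUnion] at hm
    obtain ⟨x, hx, hr⟩ := hm
    obtain ⟨i, rfl⟩ := hr
    exact hx.1 i
  have hcard : Cardinal.mk ↥(paramSet p') ≤ Cardinal.aleph0 + Cardinal.mk ↥A :=
    (Cardinal.mk_le_mk_of_subset hsub).trans (self_le_add_left _ _)
  have hfs : finSatIn L Set.univ p' := by
    intro s hs
    exact ⟨d ∘ e.symm, fun _ => Set.mem_univ _, fun x hx => (hs hx).2⟩
  obtain ⟨d₀, hd₀S, hd₀r⟩ := hsat n p' hparams hcard hfs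
  refine ⟨d₀ ∘ e, fun i => hd₀S _, ?_⟩
  have hde : (d ∘ e.symm) ∘ e = d := by
    funext i; simp
  have key : ∀ (k : ℕ) (a : Fin k → M), (∀ i, a i ∈ A) →
      ∀ φ : L.Formula (γ ⊕ Fin k), φ.Realize (Sum.elim d a) →
        φ.Realize (Sum.elim (d₀ ∘ e) a) := by
    intro k a ha φ hφ
    have hmem : (⟨k, φ.relabel (Sum.map e id), a⟩ :
        (k : ℕ) × (L.Formula (Fin n ⊕ Fin k) × (Fin k → M))) ∈ p' := by
      refine ⟨ha, ?_⟩
      rw [realize_relabel_sum]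
      simpa [hde] using hφ
    have := hd₀r _ hmem
    rw [realize_relabel_sum] at this
    simpa using this
  intro k a ha φ
  constructor
  · exact key k a ha φ
  · intro h
    by_contra hne
    have := key k a ha φ.not (Formula.realize_not.mpr hne)
    exact Formula.realize_not.mp this h

end Aux

/-- an `A`-invariant type over a `κ⁺`-saturated model `E ⊇ A` has a unique
`A`-invariant extension to any larger parameter set `D`. -/
theorem stmt2 (L : FirstOrder.Language) (M : Type) [L.Structure M] {β : Type}
    (A D : Set M) (E : L.ElementarySubstructure M)
    (hAE : A ⊆ (E : Set M)) (hED : (E : Set M) ⊆ D)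
    (hsat : satIn L (E : Set M) (Cardinal.aleph0 + Cardinal.mk ↥A))
    (p : PType L M β) (hp : isCompleteOver L (E : Set M) p)
    (hinv : invariantOver L A (E : Set M) p) :
    ∃! q : PType L M β, isCompleteOver L D q ∧ invariantOver L A D q ∧ p ⊆ q := by
  classical
  obtain ⟨hpP, hpF, hpC⟩ := hp
  -- the canonical extension
  set q₀ : PType L M β :=
    {x | (∀ i, x.2.2 i ∈ D) ∧ ∀ d' : Fin x.1 → M, (∀ i, d' i ∈ (E : Set M)) →
      EqTp L A x.2.2 d' → ⟨x.1, x.2.1, d'⟩ ∈ p} with hq₀def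
  have happrox : ∀ {γ : Type} [Fintype γ] (d : γ → M),
      ∃ d' : γ → M, (∀ i, d' i ∈ (E : Set M)) ∧ EqTp L A d d' :=
    fun d => exists_eqTp_in hAE hsat d
  -- p ⊆ q₀
  have hpq₀ : p ⊆ q₀ := by
    rintro ⟨k, φ, d⟩ hx
    refine ⟨fun i => hED (hpP _ hx i), fun d' hd' hT => ?_⟩
    exact hinv k φ d d' hd' hT hx
  have hparams : paramsIn D q₀ := fun x hx => hx.1
  -- invariance of q₀
  have hinv₀ : invariantOver L A D q₀ := by
    intro k φ d d₂ hd₂ hT hx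
    exact ⟨hd₂, fun d' hd' hT' => hx.2 d' hd' (eqTp_trans hT hT')⟩
  -- completeness of q₀
  have hcomp : ∀ (k : ℕ) (φ : L.Formula (β ⊕ Fin k)) (d : Fin k → M), (∀ i, d i ∈ D) →
      (⟨k, φ, d⟩ ∈ q₀ ∨ ⟨k, φ.not, d⟩ ∈ q₀) := by
    intro k φ d hd
    obtain ⟨d', hd'E, hTd⟩ := happrox d
    rcases hpC k φ d' hd'E with h | h
    · exact Or.inl ⟨hd, fun d'' hd'' hT'' =>
        hinv k φ d' d'' hd'' (eqTp_trans (eqTp_symm hTd) hT'') h⟩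
    · exact Or.inr ⟨hd, fun d'' hd'' hT'' =>
        hinv k φ.not d' d'' hd'' (eqTp_trans (eqTp_symm hTd) hT'') h⟩
  -- finite satisfiability of q₀
  have hfin : finSatIn L Set.univ q₀ := by
    intro s hs
    obtain ⟨f₀, -, -⟩ := hpF ∅ (by simp)
    set l : List {y // y ∈ s} := s.attach.toList with hl
    set n : ℕ := l.length with hn
    set γι : Type := (i : Fin n) × Fin (l.get i).1.1 with hγι
    haveI : Fintype γι := by rw [hγι]; exact inferInstance
    set dbar : γι → M := fun z => (l.get z.1).1.2.2 z.2 with hdbar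
    obtain ⟨dbar', hdE, hdT⟩ := happrox (γ := γι) dbar
    have hmem : ∀ i : Fin n,
        (⟨(l.get i).1.1, (l.get i).1.2.1, fun j => dbar' ⟨i, j⟩⟩ :
          (k : ℕ) × (L.Formula (β ⊕ Fin k) × (Fin k → M))) ∈ p := by
      intro i
      have hx0 : (l.get i).1 ∈ q₀ := hs (l.get i).2
      have hT : EqTp L A (dbar ∘ fun j : Fin (l.get i).1.1 => (⟨i, j⟩ : γι))
          (dbar' ∘ fun j : Fin (l.get i).1.1 => (⟨i, j⟩ : γι)) :=
        eqTp_comp _ hdT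
      have he : (dbar ∘ fun j : Fin (l.get i).1.1 => (⟨i, j⟩ : γι)) = (l.get i).1.2.2 := rfl
      rw [he] at hT
      exact hx0.2 _ (fun j => hdE _) hT
    set s' : Finset ((k : ℕ) × (L.Formula (β ⊕ Fin k) × (Fin k → M))) :=
      ((List.finRange n).map (fun i =>
        (⟨(l.get i).1.1, (l.get i).1.2.1, fun j => dbar' ⟨i, j⟩⟩ :
          (k : ℕ) × (L.Formula (β ⊕ Fin k) × (Fin k → M))))).toFinset with hs'def
    have hs'p : ↑s' ⊆ p := by
      intro y hy
      simp only [hs'def, List.coe_toFinset, Set.mem_setOf_eq, List.mem_map,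
        List.mem_finRange, true_and] at hy
      obtain ⟨i, -, rfl⟩ := hy
      exact hmem i
    obtain ⟨f, -, hf⟩ := hpF s' hs'p
    have hfx : ∀ i : Fin n,
        (l.get i).1.2.1.Realize (Sum.elim f (fun j => dbar' ⟨i, j⟩)) := by
      intro i
      exact hf ⟨(l.get i).1.1, (l.get i).1.2.1, fun j => dbar' ⟨i, j⟩⟩
        (by rw [hs'def, List.mem_toFinset]; exact List.mem_map_of_mem (List.mem_finRange i))
    -- the big formula
    set Φ : L.Formula (β ⊕ γι) :=
      ((List.finRange n).map (fun i =>
        (l.get i).1.2.1.relabel (Sum.map id (fun j => (⟨i, j⟩ : γι))))).foldr (· ⊓ ·) ⊤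
      with hΦdef
    have realizeΦ : ∀ (v : β → M) (u : γι → M),
        Φ.Realize (Sum.elim v u) ↔
          ∀ i : Fin n, (l.get i).1.2.1.Realize (Sum.elim v (fun j => u ⟨i, j⟩)) := by
      intro v u
      rw [hΦdef, realize_foldr_inf]
      constructor
      · intro h i
        have := h _ (List.mem_map_of_mem (List.mem_finRange i))
        rw [realize_relabel_sum] at this
        simpa [Function.comp_def] using this
      · intro h ψ hψ
        rw [List.mem_map] at hψ
        obtain ⟨i, -, rfl⟩ := hψ
        rw [realize_relabel_sum]
        simpa [Function.comp_def] using h i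
    -- restrict free variables and quantify
    set S : Set (β ⊕ γι) := ↑(BoundedFormula.freeVarFinset Φ) ∪ Set.range Sum.inr with hSdef
    have hSsub : ↑(BoundedFormula.freeVarFinset Φ) ⊆ S := Set.subset_union_left
    have hSfin : S.Finite :=
      ((BoundedFormula.freeVarFinset Φ).finite_toSet).union (Set.finite_range _)
    haveI : Finite ↥S := hSfin.to_subtype
    set ΦR : L.Formula ↥S := Φ.restrictFreeVar (Set.inclusion hSsub) with hΦR
    set fmap : ↥S → γι ⊕ ↥S := fun z =>
      match z with
      | ⟨Sum.inr g, _⟩ => Sum.inl g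
      | ⟨Sum.inl b, h⟩ => Sum.inr ⟨Sum.inl b, h⟩ with hfmap
    set Ψ : L.Formula γι := Formula.iExs ↥S (ΦR.relabel fmap) with hΨdef
    have hΨ : ∀ u : γι → M, Ψ.Realize u ↔ ∃ g : β → M, Φ.Realize (Sum.elim g u) := by
      intro u
      rw [hΨdef, Formula.realize_iExs]
      simp only [Formula.realize_relabel, Function.comp_def]
      constructor
      · rintro ⟨i, hi⟩
        set g : β → M := fun b =>
          if h : (Sum.inl b : β ⊕ γι) ∈ S then Sum.elim u i (fmap ⟨Sum.inl b, h⟩) else f₀ b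
          with hg
        refine ⟨g, ?_⟩
        rw [← formula_realize_restrictFreeVar hSsub (Sum.elim g u)]
        have heq : ((Sum.elim g u) ∘ (↑) : ↥S → M) = fun a => Sum.elim u i (fmap a) := by
          funext z
          obtain ⟨z, hz⟩ := z
          cases z with
          | inl b => simp [hg, hz]
          | inr gg => rfl
        rw [← hΦR, heq]
        exact hi
      · rintro ⟨g, hg⟩
        refine ⟨(Sum.elim g u) ∘ (↑), ?_⟩
        have heq : (fun a => Sum.elim u ((Sum.elim g u) ∘ (↑)) (fmap a)) =
            ((Sum.elim g u) ∘ (↑) : ↥S → M) := by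
          funext z
          obtain ⟨z, hz⟩ := z
          cases z with
          | inl b => rfl
          | inr gg => rfl
        rw [heq]
        exact (formula_realize_restrictFreeVar hSsub (Sum.elim g u)).mpr hg
    -- Ψ holds at dbar'
    have hΨd' : Ψ.Realize dbar' :=
      (hΨ dbar').mpr ⟨f, (realizeΦ f dbar').mpr hfx⟩
    -- transfer to dbar
    have hΨd : Ψ.Realize dbar := by
      have hT := eqTp_symm hdT
      have := hT 0 Fin.elim0 (fun i => i.elim0) (Ψ.relabel Sum.inl)
      rw [Formula.realize_relabel, Formula.realize_relabel] at this
      have h1 : (Sum.elim dbar' Fin.elim0 ∘ Sum.inl : γι → M) = dbar' := rfl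
      have h2 : (Sum.elim dbar Fin.elim0 ∘ Sum.inl : γι → M) = dbar := rfl
      rw [h1, h2] at this
      exact this.mp hΨd'
    obtain ⟨g, hg⟩ := (hΨ dbar).mp hΨd
    refine ⟨g, fun i => Set.mem_univ _, ?_⟩
    have key : ∀ i : Fin n,
        (((l.get i) : (k : ℕ) × (L.Formula (β ⊕ Fin k) × (Fin k → M)))).2.1.Realize
          (Sum.elim g (((l.get i) : (k : ℕ) × (L.Formula (β ⊕ Fin k) × (Fin k → M)))).2.2) := by
      intro i
      exact (realizeΦ g dbar).mp hg i
    intro x hx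
    have hmeml : (⟨x, hx⟩ : {y // y ∈ s}) ∈ l := Finset.mem_toList.mpr (Finset.mem_attach s ⟨x, hx⟩)
    obtain ⟨i, hi⟩ := List.mem_iff_get.mp hmeml
    have h2 := key i
    rw [hi] at h2
    exact h2
  -- uniqueness
  refine ⟨q₀, ⟨⟨hparams, hfin, hcomp⟩, hinv₀, hpq₀⟩, ?_⟩
  rintro q ⟨⟨hqP, hqF, hqC⟩, hqinv, hpq⟩
  have hsub : q ⊆ q₀ := by
    rintro ⟨k, φ, d⟩ hx
    refine ⟨fun i => hqP _ hx i, fun d' hd' hT => ?_⟩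
    have hq' : (⟨k, φ, d'⟩ : (k : ℕ) × (L.Formula (β ⊕ Fin k) × (Fin k → M))) ∈ q :=
      hqinv k φ d d' (fun i => hED (hd' i)) hT hx
    rcases hpC k φ d' hd' with h | h
    · exact h
    · exfalso
      have hnq : (⟨k, φ.not, d'⟩ : (k : ℕ) × (L.Formula (β ⊕ Fin k) × (Fin k → M))) ∈ q :=
        hpq h
      obtain ⟨f, -, hf⟩ := hqF {⟨k, φ, d'⟩, ⟨k, φ.not, d'⟩} (by
        intro y hy
        simp only [Finset.coe_insert, Finset.coe_singleton, Set.mem_insert_iff,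
          Set.mem_singleton_iff] at hy
        rcases hy with rfl | rfl
        · exact hq'
        · exact hnq)
      have h1 := hf ⟨k, φ, d'⟩ (by simp)
      have h2 := hf ⟨k, φ.not, d'⟩ (by simp)
      exact Formula.realize_not.mp h2 h1
  refine Set.Subset.antisymm hsub ?_
  rintro ⟨k, φ, d⟩ hx
  rcases hqC k φ d hx.1 with h | h
  · exact h
  · exfalso
    have hnq : (⟨k, φ.not, d⟩ : (k : ℕ) × (L.Formula (β ⊕ Fin k) × (Fin k → M))) ∈ q₀ :=
      hsub h
    obtain ⟨f, -, hf⟩ := hfin {⟨k, φ, d⟩, ⟨k, φ.not, d⟩} (by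
      intro y hy
      simp only [Finset.coe_insert, Finset.coe_singleton, Set.mem_insert_iff,
        Set.mem_singleton_iff] at hy
      rcases hy with rfl | rfl
      · exact hx
      · exact hnq)
    have h1 := hf ⟨k, φ, d⟩ (by simp)
    have h2 := hf ⟨k, φ.not, d⟩ (by simp)
    exact Formula.realize_not.mp h2 h1

end DR
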